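/- arXiv:1904.08850 — 8 statements merged into one kernel-verified Lean document; each statement's English description precedes it below -/
import Mathlib

section
/- Let ρ be a weak span L ←l− K ←i− I −r→ R in a category C with pushouts, and let ρ̂ = (L ←l− K −r'→ R') be its associated span, where ⟨R', i', r'⟩ is a pushout over ⟨i, r⟩. Then for any objects G, H: there exists a weak double-pushout transformation of G by ρ with result H if and only if there exists a double-pushout transformation of G by ρ̂ with result H. -/
open CategoryTheory

/-- Lemma 3 of the paper: a weak span `L ←l− K ←i− I −r→ R` transforms `G` into `H`
via a weak double pushout iff its associated span `L ←l− K −r'→ R'` (where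
`⟨R', i', r'⟩` is a pushout over `⟨i, r⟩`) transforms `G` into `H` via a double
pushout. -/
theorem weakSpan_iff_assocSpan {C : Type*} [Category C]
    {L K I R R' G H : C}
    (l : K ⟶ L) (i : I ⟶ K) (r : I ⟶ R)
    (r' : K ⟶ R') (i' : R ⟶ R')
    (hassoc : IsPushout i r r' i') :
    (∃ (D : C) (m : L ⟶ G) (k : K ⟶ D) (f : D ⟶ G) (g : D ⟶ H) (n : R ⟶ H),
        IsPushout l k m f ∧ IsPushout r (i ≫ k) n g) ↔
    (∃ (D : C) (m : L ⟶ G) (k : K ⟶ D) (f : D ⟶ G) (g : D ⟶ H) (n' : R' ⟶ H),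
        IsPushout l k m f ∧ IsPushout r' k n' g) := by
  constructor
  · rintro ⟨D, m, k, f, g, n, h1, h2⟩
    have w : i ≫ (k ≫ g) = r ≫ n := by rw [h2.w, Category.assoc]
    refine ⟨D, m, k, f, g, hassoc.desc (k ≫ g) n w, h1, ?_⟩
    refine IsPushout.of_top ?_ (hassoc.inl_desc _ _ _) hassoc.flip
    rwa [hassoc.inr_desc _ _ _]
  · rintro ⟨D, m, k, f, g, n', h1, h2⟩
    exact ⟨D, m, k, f, g, i' ≫ n', h1, hassoc.flip.paste_vert h2⟩
end

section
/- In the category FinAttr(V,U) of finitely attributed structures, let ⟨σ, id_A⟩ : ⟨F,A,f⟩ → ⟨G,A,g⟩ be a neutral morphism and ⟨τ, α⟩ : ⟨F,A,f⟩ → ⟨H,B,h⟩ an arbitrary morphism. If ⟨E, σ', τ'⟩ is a pushout over ⟨σ, τ⟩ in 𝓕, then ⟨⟨E,B,e⟩, ⟨τ',α⟩, ⟨σ',id_B⟩⟩ is a pushout over ⟨⟨σ,id_A⟩, ⟨τ,α⟩⟩ in FinAttr(V,U), where e(x) = (⋃_{v ∈ (Eτ')⁻¹(x)} Sα(g(v)))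 ∪ (⋃_{w ∈ (Eσ')⁻¹(x)} h(w)) for all x ∈ EE. -/
open CategoryTheory

universe v₁ u₁ v₂ u₂ u

variable {𝓕 : Type u₁} [Category.{v₁} 𝓕] {𝓐 : Type u₂} [Category.{v₂} 𝓐]

/-- A finitely attributed structure `⟨F, A, f⟩`. -/
structure FinAttrObj (V : 𝓕 ⥤ FintypeCat.{u}) (U : 𝓐 ⥤ Type u) where
  F : 𝓕
  A : 𝓐
  attr : ↑(V.obj F) → {s : Set (U.obj A) // s.Finite}

/-- A morphism `⟨σ, α⟩` of finitely attributed structures. -/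
@[ext]
structure FinAttrHom {V : 𝓕 ⥤ FintypeCat.{u}} {U : 𝓐 ⥤ Type u}
    (X Y : FinAttrObj V U) where
  σ : X.F ⟶ Y.F
  α : X.A ⟶ Y.A
  cond : ∀ x : ↑(V.obj X.F),
    (U.map α) '' (X.attr x).1 ⊆ (Y.attr (V.map σ x)).1

/-- The category FinAttr(V,U) of finitely attributed structures. -/
instance FinAttr.category (V : 𝓕 ⥤ FintypeCat.{u}) (U : 𝓐 ⥤ Type u) :
    Category.{max v₁ v₂} (FinAttrObj V U) where
  Hom X Y := FinAttrHom X Y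
  id X := ⟨𝟙 X.F, 𝟙 X.A, by simp⟩
  comp {X Y Z} φ ψ :=
    ⟨φ.σ ≫ ψ.σ, φ.α ≫ ψ.α, by
      intro x
      rw [U.map_comp, V.map_comp]
      calc (U.map ψ.α ∘ U.map φ.α) '' (X.attr x).1
          = U.map ψ.α '' (U.map φ.α '' (X.attr x).1) := by
            rw [Set.image_comp]
        _ ⊆ U.map ψ.α '' (Y.attr (V.map φ.σ x)).1 :=
            Set.image_mono (φ.cond x)
        _ ⊆ (Z.attr (V.map ψ.σ (V.map φ.σ x))).1 := ψ.cond _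
        _ = (Z.attr ((V.map φ.σ ≫ V.map ψ.σ) x)).1 := rfl⟩
  id_comp φ := by apply FinAttrHom.ext <;> simp
  comp_id φ := by apply FinAttrHom.ext <;> simp
  assoc φ ψ χ := by apply FinAttrHom.ext <;> simp

/-- Lemma 4 of the paper: pushouts in FinAttr(V,U) along a neutral morphism.
If `⟨σ, id_A⟩ : ⟨F,A,f⟩ → ⟨G,A,g⟩` is neutral, `⟨τ, α⟩ : ⟨F,A,f⟩ → ⟨H,B,h⟩` is any
morphism, and `⟨E, σ', τ'⟩` is a pushout over `⟨σ, τ⟩` in `𝓕`, then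
`⟨⟨E,B,e⟩, ⟨τ',α⟩, ⟨σ',id_B⟩⟩` is a pushout in FinAttr(V,U), where
`e(x) = (⋃_{v ∈ (Eτ')⁻¹(x)} Sα(g(v))) ∪ (⋃_{w ∈ (Eσ')⁻¹(x)} h(w))`. -/
theorem finAttr_pushout (V : 𝓕 ⥤ FintypeCat.{u}) (U : 𝓐 ⥤ Type u)
    [Limits.PreservesColimitsOfShape Limits.WalkingSpan V]
    {F G H E : 𝓕} {A B : 𝓐}
    (f : ↑(V.obj F) → {s : Set (U.obj A) // s.Finite})
    (g : ↑(V.obj G) → {s : Set (U.obj A) // s.Finite})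
    (h : ↑(V.obj H) → {s : Set (U.obj B) // s.Finite})
    (σ : F ⟶ G) (τ : F ⟶ H) (α : A ⟶ B)
    (τ' : G ⟶ E) (σ' : H ⟶ E)
    (hpo : IsPushout σ τ τ' σ')
    (cσ : ∀ x, (U.map (𝟙 A)) '' (f x).1 ⊆ (g (V.map σ x)).1)
    (cτ : ∀ x, (U.map α) '' (f x).1 ⊆ (h (V.map τ x)).1) :
    ∃ (c₁ : ∀ v : ↑(V.obj G), (U.map α) '' (g v).1 ⊆
        ((⋃ v' ∈ {v' : ↑(V.obj G) | V.map τ' v' = V.map τ' v},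
            U.map α '' (g v').1) ∪
         (⋃ w ∈ {w : ↑(V.obj H) | V.map σ' w = V.map τ' v}, (h w).1)))
      (c₂ : ∀ w : ↑(V.obj H), (U.map (𝟙 B)) '' (h w).1 ⊆
        ((⋃ v' ∈ {v' : ↑(V.obj G) | V.map τ' v' = V.map σ' w},
            U.map α '' (g v').1) ∪
         (⋃ w' ∈ {w' : ↑(V.obj H) | V.map σ' w' = V.map σ' w}, (h w').1))),
      IsPushout
        (show FinAttrObj.mk F A f ⟶ FinAttrObj.mk G A g from ⟨σ, 𝟙 A, cσ⟩)
        (show FinAttrObj.mk F A f ⟶ FinAttrObj.mk H B h from ⟨τ, α, cτ⟩)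
        (show FinAttrObj.mk G A g ⟶ FinAttrObj.mk E B
            (fun x => ⟨(⋃ v' ∈ {v' : ↑(V.obj G) | V.map τ' v' = x},
                U.map α '' (g v').1) ∪
              (⋃ w ∈ {w : ↑(V.obj H) | V.map σ' w = x}, (h w).1),
              ((Set.toFinite _).biUnion fun v' _ => ((g v').2.image _)).union
                ((Set.toFinite _).biUnion fun w _ => (h w).2)⟩)
          from ⟨τ', α, c₁⟩)
        (show FinAttrObj.mk H B h ⟶ FinAttrObj.mk E B
            (fun x => ⟨(⋃ v' ∈ {v' : ↑(V.obj G) | V.map τ' v' = x},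
                U.map α '' (g v').1) ∪
              (⋃ w ∈ {w : ↑(V.obj H) | V.map σ' w = x}, (h w).1),
              ((Set.toFinite _).biUnion fun v' _ => ((g v').2.image _)).union
                ((Set.toFinite _).biUnion fun w _ => (h w).2)⟩)
          from ⟨σ', 𝟙 B, c₂⟩) := by
  classical
  have c₁ : ∀ v : ↑(V.obj G), (U.map α) '' (g v).1 ⊆
      ((⋃ v' ∈ {v' : ↑(V.obj G) | V.map τ' v' = V.map τ' v},
          U.map α '' (g v').1) ∪
       (⋃ w ∈ {w : ↑(V.obj H) | V.map σ' w = V.map τ' v}, (h w).1)) :=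
    fun v y hy => Or.inl (Set.mem_biUnion rfl hy)
  have c₂ : ∀ w : ↑(V.obj H), (U.map (𝟙 B)) '' (h w).1 ⊆
      ((⋃ v' ∈ {v' : ↑(V.obj G) | V.map τ' v' = V.map σ' w},
          U.map α '' (g v').1) ∪
       (⋃ w' ∈ {w' : ↑(V.obj H) | V.map σ' w' = V.map σ' w}, (h w').1)) := by
    intro w
    simp only [CategoryTheory.Functor.map_id, CategoryTheory.types_id, Set.image_id]
    exact fun y hy => Or.inr (Set.mem_biUnion rfl hy)
  refine ⟨c₁, c₂, ?_⟩
  set Eobj : FinAttrObj V U := FinAttrObj.mk E B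
    (fun x => ⟨(⋃ v' ∈ {v' : ↑(V.obj G) | V.map τ' v' = x},
        U.map α '' (g v').1) ∪
      (⋃ w ∈ {w : ↑(V.obj H) | V.map σ' w = x}, (h w).1),
      ((Set.toFinite _).biUnion fun v' _ => ((g v').2.image _)).union
        ((Set.toFinite _).biUnion fun w _ => (h w).2)⟩) with hEobj
  have comm : (show FinAttrObj.mk F A f ⟶ FinAttrObj.mk G A g from ⟨σ, 𝟙 A, cσ⟩) ≫
      (show FinAttrObj.mk G A g ⟶ Eobj from ⟨τ', α, c₁⟩) =
      (show FinAttrObj.mk F A f ⟶ FinAttrObj.mk H B h from ⟨τ, α, cτ⟩) ≫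
      (show FinAttrObj.mk H B h ⟶ Eobj from ⟨σ', 𝟙 B, c₂⟩) := by
    apply FinAttrHom.ext
    · exact hpo.w
    · show 𝟙 A ≫ α = α ≫ 𝟙 B
      simp
  apply IsPushout.of_isColimit' ⟨comm⟩
  apply Limits.PushoutCocone.IsColimit.mk
  case desc =>
    intro s
    have wσ : σ ≫ s.inl.σ = τ ≫ s.inr.σ := congrArg FinAttrHom.σ s.condition
    have hβ : s.inl.α = α ≫ s.inr.α := by
      have := congrArg FinAttrHom.α s.condition
      change 𝟙 A ≫ s.inl.α = α ≫ s.inr.α at this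
      rwa [Category.id_comp] at this
    refine ⟨hpo.desc s.inl.σ s.inr.σ wσ, s.inr.α, ?_⟩
    intro x y hy
    rcases hy with ⟨z, hz, rfl⟩
    rcases hz with hz | hz
    · rcases Set.mem_iUnion₂.mp hz with ⟨v', hv', a, ha, rfl⟩
      have hmem : U.map s.inl.α a ∈ (s.pt.attr (V.map s.inl.σ v')).1 :=
        s.inl.cond v' (Set.mem_image_of_mem _ ha)
      have key : U.map s.inr.α (U.map α a) = U.map s.inl.α a := by
        rw [hβ, U.map_comp]; rfl
      have h1 : τ' ≫ hpo.desc s.inl.σ s.inr.σ wσ = s.inl.σ :=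
        hpo.inl_desc _ _ _
      have hv'' : V.map τ' v' = x := hv'
      rw [← h1, V.map_comp, FintypeCat.comp_apply, hv''] at hmem
      rw [key]
      exact hmem
    · rcases Set.mem_iUnion₂.mp hz with ⟨w, hw, hzw⟩
      have hmem : U.map s.inr.α z ∈ (s.pt.attr (V.map s.inr.σ w)).1 :=
        s.inr.cond w (Set.mem_image_of_mem _ hzw)
      have h1 : σ' ≫ hpo.desc s.inl.σ s.inr.σ wσ = s.inr.σ :=
        hpo.inr_desc _ _ _
      have hw' : V.map σ' w = x := hw
      rw [← h1, V.map_comp, FintypeCat.comp_apply, hw'] at hmem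
      exact hmem
  case fac_left =>
    intro s
    have hβ : s.inl.α = α ≫ s.inr.α := by
      have := congrArg FinAttrHom.α s.condition
      change 𝟙 A ≫ s.inl.α = α ≫ s.inr.α at this
      rwa [Category.id_comp] at this
    apply FinAttrHom.ext
    · exact hpo.inl_desc _ _ _
    · exact hβ.symm
  case fac_right =>
    intro s
    apply FinAttrHom.ext
    · exact hpo.inr_desc _ _ _
    · exact Category.id_comp _
  case uniq =>
    intro s m h₁ h₂
    apply FinAttrHom.ext
    · apply hpo.hom_ext
      · rw [hpo.inl_desc]
        exact congrArg FinAttrHom.σ h₁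
      · rw [hpo.inr_desc]
        exact congrArg FinAttrHom.σ h₂
    · have := congrArg FinAttrHom.α h₂
      change 𝟙 B ≫ m.α = s.inr.α at this
      rwa [Category.id_comp] at this
end

section
/- In the category FinAttr(V,U), if g_a : D → H_a is a neutral morphism for all 1 ≤ a ≤ p (p ≥ 1), then there exists a colimit ⟨H, h₁,…,h_p⟩ over ⟨g₁,…,g_p⟩ (a wide pushout) such that all h_a are neutral morphisms. -/
open CategoryTheory

universe v₁ u₁ v₂ u₂ u

variable {𝓕 : Type u₁} [Category.{v₁} 𝓕] {𝓐 : Type u₂} [Category.{v₂} 𝓐]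

lemma exists_widePushout [Limits.HasPushouts 𝓕]
    (n : ℕ) {D : 𝓕} {H : Fin (n + 1) → 𝓕} (g : ∀ a, D ⟶ H a) :
    ∃ (W : 𝓕) (h : ∀ a, H a ⟶ W),
      (∀ a b, g a ≫ h a = g b ≫ h b) ∧
      ∀ (Z : 𝓕) (z : ∀ a, H a ⟶ Z), (∀ a b, g a ≫ z a = g b ≫ z b) →
        ∃! u : W ⟶ Z, ∀ a, h a ≫ u = z a := by
  induction n with
  | zero =>
    have e : ∀ a : Fin (0 + 1), a = 0 := fun a => Fin.fin_one_eq_zero a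
    refine ⟨H 0, fun a => eqToHom (by rw [e a]), ?_, ?_⟩
    · intro a b
      obtain rfl : a = 0 := e a
      obtain rfl : b = 0 := e b
      rfl
    · intro Z z _
      refine ⟨z 0, fun a => ?_, fun v hv => ?_⟩
      · obtain rfl : a = 0 := e a
        simp
      · simpa using hv 0
  | succ n ih =>
    obtain ⟨W', h', hc', huniv'⟩ := ih (fun a : Fin (n + 1) => g a.castSucc)
    set c : D ⟶ W' := g (Fin.castSucc 0) ≫ h' 0 with hc
    set inl : W' ⟶ Limits.pushout c (g (Fin.last (n + 1))) :=
      Limits.pushout.inl c (g (Fin.last (n + 1))) with hinl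
    set inr : H (Fin.last (n + 1)) ⟶ Limits.pushout c (g (Fin.last (n + 1))) :=
      Limits.pushout.inr c (g (Fin.last (n + 1))) with hinr
    have hsq : c ≫ inl = g (Fin.last (n + 1)) ≫ inr := Limits.pushout.condition
    refine ⟨Limits.pushout c (g (Fin.last (n + 1))),
      Fin.lastCases inr (fun a => h' a ≫ inl), ?_, ?_⟩
    · have key : ∀ a : Fin (n + 1),
        g a.castSucc ≫ (Fin.lastCases inr (fun a => h' a ≫ inl) a.castSucc
          : H a.castSucc ⟶ _) = c ≫ inl := by
        intro a
        rw [Fin.lastCases_castSucc, ← Category.assoc, hc' a 0]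
      intro a b
      induction a using Fin.lastCases with
      | last =>
        induction b using Fin.lastCases with
        | last => rfl
        | cast b =>
          rw [key b]
          simp only [Fin.lastCases_last]
          exact hsq.symm
      | cast a =>
        induction b using Fin.lastCases with
        | last =>
          rw [key a]
          simp only [Fin.lastCases_last]
          exact hsq
        | cast b => rw [key a, key b]
    · intro Z z hz
      obtain ⟨u', hu', huu'⟩ := huniv' Z (fun a => z a.castSucc)
        (fun a b => hz a.castSucc b.castSucc)
      have hdesc : c ≫ u' = g (Fin.last (n + 1)) ≫ z (Fin.last (n + 1)) := by
        rw [hc, Category.assoc, hu' 0, hz]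
      refine ⟨Limits.pushout.desc u' (z (Fin.last (n + 1))) hdesc, ?_, ?_⟩
      · intro a
        induction a using Fin.lastCases with
        | last =>
          simp only [Fin.lastCases_last, hinr, Limits.pushout.inr_desc]
        | cast a =>
          simp only [Fin.lastCases_castSucc, Category.assoc, hinl,
            Limits.pushout.inl_desc]
          exact hu' a
      · intro v hv
        apply Limits.pushout.hom_ext
        · rw [Limits.pushout.inl_desc]
          refine huu' (inl ≫ v) fun a => ?_
          rw [← Category.assoc]
          simpa only [Fin.lastCases_castSucc] using hv a.castSucc
        · rw [Limits.pushout.inr_desc]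
          simpa only [Fin.lastCases_last] using hv (Fin.last (n + 1))

/-- Corollary 1 of the paper: in FinAttr(V,U) (with `𝓕` having pushouts and `V`
preserving them), if `g_a : D → H_a` is neutral for all `1 ≤ a ≤ p` (`p ≥ 1`), then
there exists a colimit (wide pushout) `⟨H, h₁, …, h_p⟩` over `⟨g₁, …, g_p⟩` such
that all the `h_a` are neutral. -/
theorem finAttr_wide_pushout (V : 𝓕 ⥤ FintypeCat.{u}) (U : 𝓐 ⥤ Type u)
    [Limits.HasPushouts 𝓕] [Limits.PreservesColimitsOfShape Limits.WalkingSpan V]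
    {p : ℕ} (hp : 1 ≤ p)
    {DF : 𝓕} {A : 𝓐} (dattr : ↑(V.obj DF) → {s : Set (U.obj A) // s.Finite})
    {HF : Fin p → 𝓕}
    (hattr : ∀ a, ↑(V.obj (HF a)) → {s : Set (U.obj A) // s.Finite})
    (g : ∀ a : Fin p,
      FinAttrObj.mk DF A dattr ⟶ FinAttrObj.mk (HF a) A (hattr a))
    (hneutral : ∀ a, (g a).α = 𝟙 A) :
    ∃ (WF : 𝓕) (wattr : ↑(V.obj WF) → {s : Set (U.obj A) // s.Finite})
      (h : ∀ a : Fin p,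
        FinAttrObj.mk (HF a) A (hattr a) ⟶ FinAttrObj.mk WF A wattr),
      (∀ a, (h a).α = 𝟙 A) ∧
      (∀ a b, g a ≫ h a = g b ≫ h b) ∧
      (∀ (Z : FinAttrObj V U)
        (z : ∀ a : Fin p, FinAttrObj.mk (HF a) A (hattr a) ⟶ Z),
        (∀ a b, g a ≫ z a = g b ≫ z b) →
        ∃! u : FinAttrObj.mk WF A wattr ⟶ Z, ∀ a, h a ≫ u = z a) := by
  classical
  obtain ⟨n, rfl⟩ : ∃ n, p = n + 1 := ⟨p - 1, by omega⟩
  obtain ⟨WF, hσ, hcoc, huniv⟩ := exists_widePushout n (fun a => (g a).σ)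
  refine ⟨WF,
    fun y => ⟨⋃ (a : Fin (n + 1)) (x : {x : ↑(V.obj (HF a)) // V.map (hσ a) x = y}),
      (hattr a x.1).1,
      Set.finite_iUnion fun a => Set.finite_iUnion fun x => (hattr a x.1).2⟩,
    fun a => ⟨hσ a, 𝟙 A, ?_⟩, fun a => rfl, ?_, ?_⟩
  · intro x t ht
    obtain ⟨s, hs, rfl⟩ := ht
    simp only [FunctorToTypes.map_id_apply]
    exact Set.mem_iUnion.2 ⟨a, Set.mem_iUnion.2 ⟨⟨x, rfl⟩, hs⟩⟩
  · intro a b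
    apply FinAttrHom.ext
    · exact hcoc a b
    · show (g a).α ≫ 𝟙 A = (g b).α ≫ 𝟙 A
      rw [hneutral a, hneutral b]
  · intro Z z hz
    have hzσ : ∀ a b, (g a).σ ≫ (z a).σ = (g b).σ ≫ (z b).σ :=
      fun a b => congrArg FinAttrHom.σ (hz a b)
    obtain ⟨u', hu', huu'⟩ := huniv Z.F (fun a => (z a).σ) hzσ
    have hα : ∀ a, (z a).α = (z 0).α := by
      intro a
      have h1 : (g a).α ≫ (z a).α = (g 0).α ≫ (z 0).α :=
        congrArg FinAttrHom.α (hz a 0)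
      rw [hneutral a, hneutral 0, Category.id_comp, Category.id_comp] at h1
      exact h1
    have cond : ∀ y : ↑(V.obj WF),
        U.map (z 0).α '' (⋃ (a : Fin (n + 1))
          (x : {x : ↑(V.obj (HF a)) // V.map (hσ a) x = y}), (hattr a x.1).1)
          ⊆ (Z.attr (V.map u' y)).1 := by
      intro y
      rintro t ⟨s, hs, rfl⟩
      simp only [Set.mem_iUnion] at hs
      obtain ⟨a, ⟨x, hx⟩, hsx⟩ := hs
      have h2 : V.map (z a).σ x = V.map u' y := by
        rw [← hu' a, V.map_comp]
        show V.map u' (V.map (hσ a) x) = V.map u' y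
        rw [hx]
      rw [← hα a, ← h2]
      exact (z a).cond x ⟨s, hsx, rfl⟩
    refine ⟨⟨u', (z 0).α, cond⟩, fun a => ?_, fun v hv => ?_⟩
    · apply FinAttrHom.ext
      · exact hu' a
      · show 𝟙 A ≫ (z 0).α = (z a).α
        rw [Category.id_comp, hα a]
    · apply FinAttrHom.ext
      · exact huu' v.σ (fun a => congrArg FinAttrHom.σ (hv a))
      · have h1 : 𝟙 A ≫ v.α = (z 0).α := congrArg FinAttrHom.α (hv 0)
        rw [Category.id_comp] at h1
        exact h1
end

section
/- In the category FinAttr(V,U), let ⟨σ, id_A⟩ : ⟨G,A,g⟩ → ⟨F,A,f⟩ and ⟨τ, id_A⟩ : ⟨H,A,h⟩ → ⟨F,A,f⟩ be neutral morphisms, and let ⟨E, σ', τ'⟩ be a pullback over ⟨σ, τ⟩ in 𝓕. Then ⟨⟨E,A,e⟩, ⟨σ',id_A⟩, ⟨τ',id_A⟩⟩ is a pullback over the two given morphisms in FinAttr(V,U), where e(x) = g(Eτ'(x)) ∩ h(Eσ'(x)) for all x ∈ EE. -/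
open CategoryTheory

universe v₁ u₁ v₂ u₂ u

variable {𝓕 : Type u₁} [Category.{v₁} 𝓕] {𝓐 : Type u₂} [Category.{v₂} 𝓐]

@[simp] lemma FinAttrHom.comp_α_aux {V : 𝓕 ⥤ FintypeCat.{u}} {U : 𝓐 ⥤ Type u}
    {X Y Z : FinAttrObj V U} (φ : X ⟶ Y) (ψ : Y ⟶ Z) :
    (φ ≫ ψ).α = φ.α ≫ ψ.α := rfl

/-- Lemma 5 of the paper: pullbacks of neutral morphisms in FinAttr(V,U).
If `⟨σ, id_A⟩ : ⟨G,A,g⟩ → ⟨F,A,f⟩` and `⟨τ, id_A⟩ : ⟨H,A,h⟩ → ⟨F,A,f⟩` are neutral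
morphisms and `⟨E, σ', τ'⟩` is a pullback over `⟨σ, τ⟩` in `𝓕`, then
`⟨⟨E,A,e⟩, ⟨σ',id_A⟩, ⟨τ',id_A⟩⟩` is a pullback in FinAttr(V,U), where
`e(x) = g(Eτ'(x)) ∩ h(Eσ'(x))`. -/
theorem finAttr_pullback (V : 𝓕 ⥤ FintypeCat.{u}) (U : 𝓐 ⥤ Type u)
    {F G H E : 𝓕} {A : 𝓐}
    (f : ↑(V.obj F) → {s : Set (U.obj A) // s.Finite})
    (g : ↑(V.obj G) → {s : Set (U.obj A) // s.Finite})
    (h : ↑(V.obj H) → {s : Set (U.obj A) // s.Finite})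
    (σ : G ⟶ F) (τ : H ⟶ F) (τ' : E ⟶ G) (σ' : E ⟶ H)
    (hpb : IsPullback τ' σ' σ τ)
    (cσ : ∀ x, (U.map (𝟙 A)) '' (g x).1 ⊆ (f (V.map σ x)).1)
    (cτ : ∀ x, (U.map (𝟙 A)) '' (h x).1 ⊆ (f (V.map τ x)).1) :
    ∃ (c₁ : ∀ x : ↑(V.obj E), (U.map (𝟙 A)) ''
        ((g (V.map τ' x)).1 ∩ (h (V.map σ' x)).1) ⊆ (g (V.map τ' x)).1)
      (c₂ : ∀ x : ↑(V.obj E), (U.map (𝟙 A)) ''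
        ((g (V.map τ' x)).1 ∩ (h (V.map σ' x)).1) ⊆ (h (V.map σ' x)).1),
      IsPullback
        (show FinAttrObj.mk E A
            (fun x => ⟨(g (V.map τ' x)).1 ∩ (h (V.map σ' x)).1,
              (g (V.map τ' x)).2.inter_of_left _⟩) ⟶ FinAttrObj.mk G A g
          from ⟨τ', 𝟙 A, c₁⟩)
        (show FinAttrObj.mk E A
            (fun x => ⟨(g (V.map τ' x)).1 ∩ (h (V.map σ' x)).1,
              (g (V.map τ' x)).2.inter_of_left _⟩) ⟶ FinAttrObj.mk H A h
          from ⟨σ', 𝟙 A, c₂⟩)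
        (show FinAttrObj.mk G A g ⟶ FinAttrObj.mk F A f from ⟨σ, 𝟙 A, cσ⟩)
        (show FinAttrObj.mk H A h ⟶ FinAttrObj.mk F A f from ⟨τ, 𝟙 A, cτ⟩) := by
  have hid : (U.map (𝟙 A) : U.obj A → U.obj A) = id := by rw [U.map_id]; rfl
  refine ⟨fun x => by rw [hid, Set.image_id]; exact Set.inter_subset_left,
          fun x => by rw [hid, Set.image_id]; exact Set.inter_subset_right, ?_⟩
  refine IsPullback.of_isLimit' ⟨?_⟩ (Limits.PullbackCone.IsLimit.mk _ ?_ ?_ ?_ ?_)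
  · apply FinAttrHom.ext
    · exact hpb.w
    · rfl
  · intro s
    refine ⟨hpb.lift s.fst.σ s.snd.σ (congrArg FinAttrHom.σ s.condition),
      s.fst.α, ?_⟩
    intro x
    have hα : s.fst.α = s.snd.α := by
      have := congrArg FinAttrHom.α s.condition
      simpa using this
    have h1 : V.map (hpb.lift s.fst.σ s.snd.σ (congrArg FinAttrHom.σ s.condition)) ≫
        V.map τ' = V.map s.fst.σ := by
      rw [← V.map_comp, hpb.lift_fst]
    have h2 : V.map (hpb.lift s.fst.σ s.snd.σ (congrArg FinAttrHom.σ s.condition)) ≫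
        V.map σ' = V.map s.snd.σ := by
      rw [← V.map_comp, hpb.lift_snd]
    intro y hy
    constructor
    · have := s.fst.cond x hy
      rwa [show V.map τ' (V.map (hpb.lift s.fst.σ s.snd.σ
        (congrArg FinAttrHom.σ s.condition)) x) = V.map s.fst.σ x from
        by rw [← h1]; rfl]
    · have := s.snd.cond x (hα ▸ hy)
      rwa [show V.map σ' (V.map (hpb.lift s.fst.σ s.snd.σ
        (congrArg FinAttrHom.σ s.condition)) x) = V.map s.snd.σ x from
        by rw [← h2]; rfl]
  · intro s
    apply FinAttrHom.ext
    · exact hpb.lift_fst _ _ _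
    · simp
  · intro s
    apply FinAttrHom.ext
    · exact hpb.lift_snd _ _ _
    · have := congrArg FinAttrHom.α s.condition
      simpa using this
  · intro s m hm₁ hm₂
    apply FinAttrHom.ext
    · exact hpb.hom_ext
        (by rw [hpb.lift_fst]; exact congrArg FinAttrHom.σ hm₁)
        (by rw [hpb.lift_snd]; exact congrArg FinAttrHom.σ hm₂)
    · have := congrArg FinAttrHom.α hm₁
      simpa using this
end

section
/- In the category FinAttr(V,U), if f_a : D_a → G is a neutral morphism for all 1 ≤ a ≤ p (p ≥ 1), then there exists a limit ⟨D, e₁,…,e_p⟩ over ⟨f₁,…,f_p⟩ (a wide pullback) such that all e_a are neutral morphisms. -/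
open CategoryTheory

universe v₁ u₁ v₂ u₂ u

variable {𝓕 : Type u₁} [Category.{v₁} 𝓕] {𝓐 : Type u₂} [Category.{v₂} 𝓐]

open Limits in
lemma wide_pb_aux {C : Type*} [Category C] [HasPullbacks C] {G : C} :
    ∀ (p : ℕ) (D : Fin (p+1) → C) (g : ∀ a, D a ⟶ G),
    ∃ (W : C) (π : ∀ a, W ⟶ D a),
      (∀ a b, π a ≫ g a = π b ≫ g b) ∧
      ∀ (Z : C) (z : ∀ a, Z ⟶ D a), (∀ a b, z a ≫ g a = z b ≫ g b) →
        ∃! u : Z ⟶ W, ∀ a, u ≫ π a = z a := by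
  intro p
  induction p with
  | zero =>
    intro D g
    refine ⟨D 0, fun a => eqToHom (by rw [Fin.fin_one_eq_zero a]), ?_, ?_⟩
    · intro a b
      rw [Fin.fin_one_eq_zero a, Fin.fin_one_eq_zero b]
    · intro Z z _
      refine ⟨z 0, fun a => ?_, fun v hv => ?_⟩
      · rw [Fin.fin_one_eq_zero a]; simp
      · have := hv 0
        simpa using this
  | succ p ih =>
    intro D g
    obtain ⟨W', π', hcomp', huniv'⟩ := ih (fun i => D i.castSucc) (fun i => g i.castSucc)
    set h : W' ⟶ G := π' 0 ≫ g (Fin.castSucc 0) with hh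
    refine ⟨pullback h (g (Fin.last (p+1))),
      fun a => Fin.lastCases (pullback.snd _ _) (fun i => pullback.fst _ _ ≫ π' i) a, ?_, ?_⟩
    · intro a b
      have key : ∀ a : Fin (p+2),
          (Fin.lastCases (motive := fun a => pullback h (g (Fin.last (p+1))) ⟶ D a)
            (pullback.snd _ _) (fun i => pullback.fst _ _ ≫ π' i) a) ≫ g a
          = pullback.fst _ _ ≫ h := by
        intro a
        induction a using Fin.lastCases with
        | last =>
          simp only [Fin.lastCases_last]
          exact (pullback.condition).symm
        | cast i =>
          simp only [Fin.lastCases_castSucc, Category.assoc]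
          rw [hcomp' i 0]
      rw [key a, key b]
    · intro Z z hz
      obtain ⟨u', hu', hu'uniq⟩ := huniv' Z (fun i => z i.castSucc)
        (fun i j => hz i.castSucc j.castSucc)
      have hcone : u' ≫ h = z (Fin.last (p+1)) ≫ g (Fin.last (p+1)) := by
        rw [hh, ← Category.assoc, hu' 0]
        exact hz (Fin.castSucc 0) (Fin.last (p+1))
      refine ⟨pullback.lift u' (z (Fin.last (p+1))) hcone, ?_, ?_⟩
      · intro a
        induction a using Fin.lastCases with
        | last => simp; exact pullback.lift_snd _ _ _
        | cast i =>
          simp only [Fin.lastCases_castSucc, ← Category.assoc, pullback.lift_fst]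
          exact hu' i
      · intro v hv
        apply pullback.hom_ext
        · rw [pullback.lift_fst]
          apply hu'uniq
          intro i
          have := hv i.castSucc
          simpa [Category.assoc] using this
        · rw [pullback.lift_snd]
          simpa using hv (Fin.last (p+1))

/-- Corollary 2 of the paper: in FinAttr(V,U) (with `𝓕` having pullbacks), if
`f_a : D_a → G` is neutral for all `1 ≤ a ≤ p` (`p ≥ 1`), then there exists a limit
(wide pullback) `⟨D, e₁, …, e_p⟩` over `⟨f₁, …, f_p⟩` such that all the `e_a` are
neutral. -/
theorem finAttr_wide_pullback (V : 𝓕 ⥤ FintypeCat.{u}) (U : 𝓐 ⥤ Type u)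
    [Limits.HasPullbacks 𝓕]
    {p : ℕ} (hp : 1 ≤ p)
    {GF : 𝓕} {A : 𝓐} (gattr : ↑(V.obj GF) → {s : Set (U.obj A) // s.Finite})
    {DF : Fin p → 𝓕}
    (dattr : ∀ a, ↑(V.obj (DF a)) → {s : Set (U.obj A) // s.Finite})
    (f : ∀ a : Fin p,
      FinAttrObj.mk (DF a) A (dattr a) ⟶ FinAttrObj.mk GF A gattr)
    (hneutral : ∀ a, (f a).α = 𝟙 A) :
    ∃ (WF : 𝓕) (wattr : ↑(V.obj WF) → {s : Set (U.obj A) // s.Finite})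
      (e : ∀ a : Fin p,
        FinAttrObj.mk WF A wattr ⟶ FinAttrObj.mk (DF a) A (dattr a)),
      (∀ a, (e a).α = 𝟙 A) ∧
      (∀ a b, e a ≫ f a = e b ≫ f b) ∧
      (∀ (Z : FinAttrObj V U)
        (z : ∀ a : Fin p, Z ⟶ FinAttrObj.mk (DF a) A (dattr a)),
        (∀ a b, z a ≫ f a = z b ≫ f b) →
        ∃! u : Z ⟶ FinAttrObj.mk WF A wattr, ∀ a, u ≫ e a = z a) := by
  obtain ⟨p', rfl⟩ : ∃ p', p = p' + 1 := ⟨p - 1, by omega⟩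
  obtain ⟨WF, π, hcomp, huniv⟩ := wide_pb_aux p' DF (fun a => (f a).σ)
  refine ⟨WF, fun x => ⟨⋂ a, (dattr a (V.map (π a) x)).1,
      Set.Finite.subset ((dattr 0 (V.map (π 0) x)).2) (Set.iInter_subset _ 0)⟩,
    fun a => ⟨π a, 𝟙 A, ?_⟩, fun a => rfl, ?_, ?_⟩
  · intro x
    simp only [U.map_id, types_id_apply, Set.image_id']
    rintro y ⟨w, hw, rfl⟩; exact Set.iInter_subset _ a hw
  · intro a b
    apply FinAttrHom.ext
    · exact hcomp a b
    · show 𝟙 A ≫ (f a).α = 𝟙 A ≫ (f b).α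
      rw [hneutral a, hneutral b]
  · intro Z z hz
    have hα : ∀ a, (z a).α = (z 0).α := by
      intro a
      have : (z a).α ≫ (f a).α = (z 0).α ≫ (f 0).α := congrArg FinAttrHom.α (hz a 0)
      simpa [hneutral, FinAttr.category] using this
    obtain ⟨uσ, huσ, huσuniq⟩ := huniv Z.F (fun a => (z a).σ)
      (fun a b => congrArg FinAttrHom.σ (hz a b))
    have hcond : ∀ x : ↑(V.obj Z.F),
        (U.map (z 0).α) '' (Z.attr x).1 ⊆
          ⋂ a, (dattr a (V.map (π a) (V.map uσ x))).1 := by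
      intro x
      apply Set.subset_iInter
      intro a
      have : V.map (π a) (V.map uσ x) = V.map ((z a).σ) x := by
        rw [← huσ a, V.map_comp]; rfl
      rw [this, ← hα a]
      exact (z a).cond x
    refine ⟨⟨uσ, (z 0).α, hcond⟩, ?_, ?_⟩
    · intro a
      apply FinAttrHom.ext
      · exact huσ a
      · show (z 0).α ≫ 𝟙 A = (z a).α
        rw [Category.comp_id, hα a]
    · intro v hv
      apply FinAttrHom.ext
      · exact huσuniq v.σ (fun a => congrArg FinAttrHom.σ (hv a))
      · have : v.α ≫ 𝟙 A = (z 0).α := congrArg FinAttrHom.α (hv 0)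
        simpa [FinAttr.category] using this
end

section
/- In a weak adhesive HLR category ⟨C, M⟩ with coproducts compatible with M, let ρ₁, ρ₂ be M-weak spans, and let γ₁, γ₂ be parallel independent direct transformations of G by ρ₁, ρ₂ respectively. If there is a parallel coherent transformation G ⟹_{γ₁,γ₂} H', then there is a direct transformation of G by the coproduct weak span ρ₁+ρ₂, namely γ₁+γ₂, with G ⟹_{γ₁+γ₂} H'. -/
open CategoryTheory CategoryTheory.Limits

/-- Pasting lemma for "coproduct" pushout squares: if `P₁` is the pushout of
`L₁ ← K₁ → X` and `P₂` is the pushout of `L₂ ← K₂ → P₁`, then `P₂` is the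
pushout of `L₁ ⨿ L₂ ← K₁ ⨿ K₂ → X`. -/
lemma aux_paste_coprod {C : Type*} [Category C] [HasBinaryCoproducts C]
    {K₁ L₁ K₂ L₂ X P₁ P₂ : C}
    (l₁ : K₁ ⟶ L₁) (p₁ : K₁ ⟶ X) (a₁ : L₁ ⟶ P₁) (c₁ : X ⟶ P₁)
    (l₂ : K₂ ⟶ L₂) (p₂ : K₂ ⟶ X) (a₂ : L₂ ⟶ P₂) (c₂ : P₁ ⟶ P₂)
    (h1 : IsPushout l₁ p₁ a₁ c₁) (h2 : IsPushout l₂ (p₂ ≫ c₁) a₂ c₂) :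
    IsPushout (coprod.map l₁ l₂) (coprod.desc p₁ p₂)
      (coprod.desc (a₁ ≫ c₂) a₂) (c₁ ≫ c₂) := by
  have eq : coprod.map l₁ l₂ ≫ coprod.desc (a₁ ≫ c₂) a₂ =
      coprod.desc p₁ p₂ ≫ (c₁ ≫ c₂) := by
    apply coprod.hom_ext
    · simpa [coprod.inl_desc, coprod.inr_desc] using h1.w =≫ c₂
    · simpa [coprod.inl_desc, coprod.inr_desc] using h2.w
  have cond : ∀ (s : PushoutCocone (coprod.map l₁ l₂) (coprod.desc p₁ p₂)),
      l₁ ≫ coprod.inl ≫ s.inl = p₁ ≫ s.inr := by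
    intro s
    simpa [coprod.inl_desc, coprod.inr_desc] using coprod.inl ≫= s.condition
  have cond' : ∀ (s : PushoutCocone (coprod.map l₁ l₂) (coprod.desc p₁ p₂)),
      l₂ ≫ coprod.inr ≫ s.inl = p₂ ≫ s.inr := by
    intro s
    simpa [coprod.inl_desc, coprod.inr_desc] using coprod.inr ≫= s.condition
  have cond₂ : ∀ (s : PushoutCocone (coprod.map l₁ l₂) (coprod.desc p₁ p₂)),
      l₂ ≫ coprod.inr ≫ s.inl =
        (p₂ ≫ c₁) ≫ h1.desc (coprod.inl ≫ s.inl) s.inr (cond s) := by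
    intro s
    rw [Category.assoc, h1.inr_desc, cond' s]
  refine IsPushout.of_isColimit (c := PushoutCocone.mk _ _ eq)
    (PushoutCocone.IsColimit.mk eq
      (fun s => h2.desc (coprod.inr ≫ s.inl)
        (h1.desc (coprod.inl ≫ s.inl) s.inr (cond s)) (cond₂ s)) ?_ ?_ ?_)
  · intro s
    apply coprod.hom_ext
    · simp [coprod.inl_desc, coprod.inr_desc]
    · simp [coprod.inl_desc, coprod.inr_desc]
  · intro s
    simp
  · intro s m hml hmr
    -- hml : coprod.desc (a₁ ≫ c₂) a₂ ≫ m = s.inl, hmr : (c₁ ≫ c₂) ≫ m = s.inr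
    apply h2.hom_ext
    · rw [h2.inl_desc]
      simpa [coprod.inl_desc, coprod.inr_desc] using coprod.inr ≫= hml
    · rw [h2.inr_desc]
      apply h1.hom_ext
      · rw [h1.inl_desc, ← Category.assoc]
        simpa [← Category.assoc, coprod.inl_desc, coprod.inr_desc] using coprod.inl ≫= hml
      · rw [h1.inr_desc, ← Category.assoc]
        simpa using hmr

/-- Theorem 1 of the paper: in a weak adhesive HLR category `⟨C, M⟩` (whose assumed
properties — closure of `M` under pushouts and pullbacks, pushouts along `M` being
pullbacks, and the `M` pushout-pullback decomposition lemma — are listed as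
hypotheses) with binary coproducts compatible with `M`, if `γ₁, γ₂` are parallel
independent direct transformations of `G` by `M`-weak spans `ρ₁, ρ₂` and there is a
parallel coherent transformation `G ⟹_{γ₁,γ₂} H'`, then there is a direct
transformation of `G` by the coproduct weak span `ρ₁ + ρ₂` with result `H'`. -/
theorem parallel_coherent_of_parallel_independent
    {C : Type*} [Category C] [HasBinaryCoproducts C]
    (M : MorphismProperty C)
    -- M is closed under pushouts
    (hMpo : ∀ {W X Y Z : C} (f : W ⟶ X) (g : W ⟶ Y) (h : X ⟶ Z) (i : Y ⟶ Z),
      IsPushout f g h i → M f → M i)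
    -- M is closed under pullbacks
    (hMpb : ∀ {P X Y Z : C} (p : P ⟶ X) (q : P ⟶ Y) (f : X ⟶ Z) (g : Y ⟶ Z),
      IsPullback p q f g → M f → M q)
    -- pushouts along M-morphisms are pullbacks
    (hMpopb : ∀ {W X Y Z : C} (f : W ⟶ X) (g : W ⟶ Y) (h : X ⟶ Z) (i : Y ⟶ Z),
      IsPushout f g h i → M f → IsPullback f g h i)
    -- the M pushout-pullback decomposition lemma
    (hMdecomp : ∀ {A B E C' D F : C} (u : A ⟶ B) (t : B ⟶ E)
      (v : A ⟶ C') (v₂ : B ⟶ D) (v₃ : E ⟶ F) (b : C' ⟶ D) (w : D ⟶ F),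
      u ≫ v₂ = v ≫ b → t ≫ v₃ = v₂ ≫ w →
      IsPushout (u ≫ t) v v₃ (b ≫ w) → IsPullback t v₂ v₃ w →
      M w → (M u ∨ M v) →
      IsPushout u v v₂ b ∧ IsPullback u v v₂ b ∧
        IsPushout t v₂ v₃ w ∧ IsPullback t v₂ v₃ w)
    -- coproducts are compatible with M
    (hMcoprod : ∀ {X₁ Y₁ X₂ Y₂ : C} (f : X₁ ⟶ Y₁) (g : X₂ ⟶ Y₂),
      M f → M g → M (coprod.map f g))
    {G H' : C}
    -- the two M-weak spans
    {L₁ K₁ I₁ R₁ L₂ K₂ I₂ R₂ : C}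
    (l₁ : K₁ ⟶ L₁) (i₁ : I₁ ⟶ K₁) (r₁ : I₁ ⟶ R₁)
    (l₂ : K₂ ⟶ L₂) (i₂ : I₂ ⟶ K₂) (r₂ : I₂ ⟶ R₂)
    (hl₁ : M l₁) (hi₁ : M i₁) (hr₁ : M r₁)
    (hl₂ : M l₂) (hi₂ : M i₂) (hr₂ : M r₂)
    -- the two direct transformations γ₁, γ₂
    {D₁ H₁ D₂ H₂ : C}
    (m₁ : L₁ ⟶ G) (k₁ : K₁ ⟶ D₁) (f₁ : D₁ ⟶ G) (g₁ : D₁ ⟶ H₁) (n₁ : R₁ ⟶ H₁)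
    (m₂ : L₂ ⟶ G) (k₂ : K₂ ⟶ D₂) (f₂ : D₂ ⟶ G) (g₂ : D₂ ⟶ H₂) (n₂ : R₂ ⟶ H₂)
    (hγ₁l : IsPushout l₁ k₁ m₁ f₁) (hγ₁r : IsPushout r₁ (i₁ ≫ k₁) n₁ g₁)
    (hγ₂l : IsPushout l₂ k₂ m₂ f₂) (hγ₂r : IsPushout r₂ (i₂ ≫ k₂) n₂ g₂)
    -- parallel independence
    (j₁ : L₁ ⟶ D₂) (j₂ : L₂ ⟶ D₁)
    (hj₁ : j₁ ≫ f₂ = m₁) (hj₂ : j₂ ≫ f₁ = m₂)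
    -- the parallel coherent transformation G ⟹_{γ₁,γ₂} H'
    {D' H'₁ H'₂ : C}
    (e₁ : D' ⟶ D₁) (e₂ : D' ⟶ D₂)
    (hlim : IsPullback e₁ e₂ f₁ f₂)
    (d₁ : I₁ ⟶ D') (d₂ : I₂ ⟶ D')
    (hd₁ : d₁ ≫ e₁ = i₁ ≫ k₁) (hd₁' : d₁ ≫ e₂ = i₁ ≫ l₁ ≫ j₁)
    (hd₂ : d₂ ≫ e₂ = i₂ ≫ k₂) (hd₂' : d₂ ≫ e₁ = i₂ ≫ l₂ ≫ j₂)
    (g'₁ : D' ⟶ H'₁) (n'₁ : R₁ ⟶ H'₁) (g'₂ : D' ⟶ H'₂) (n'₂ : R₂ ⟶ H'₂)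
    (hH'₁ : IsPushout r₁ d₁ n'₁ g'₁) (hH'₂ : IsPushout r₂ d₂ n'₂ g'₂)
    (h₁ : H'₁ ⟶ H') (h₂ : H'₂ ⟶ H')
    (hcolim : IsPushout g'₁ g'₂ h₁ h₂) :
    -- a direct transformation of G by ρ₁ + ρ₂ with result H' (namely γ₁ + γ₂)
    ∃ (D : C) (k : K₁ ⨿ K₂ ⟶ D) (f : D ⟶ G) (g : D ⟶ H') (n : R₁ ⨿ R₂ ⟶ H'),
      IsPushout (coprod.map l₁ l₂) k (coprod.desc m₁ m₂) f ∧
      IsPushout (coprod.map r₁ r₂) (coprod.map i₁ i₂ ≫ k) n g := by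
  -- `f₂ ∈ M` since it is a pushout of `l₂ ∈ M`
  have hf₂ : M f₂ := hMpo l₂ k₂ m₂ f₂ hγ₂l hl₂
  -- the induced morphisms `p₁ : K₁ ⟶ D'` and `p₂ : K₂ ⟶ D'`
  have hc₁ : k₁ ≫ f₁ = (l₁ ≫ j₁) ≫ f₂ := by
    rw [Category.assoc, hj₁, ← hγ₁l.w]
  have hc₂ : (l₂ ≫ j₂) ≫ f₁ = k₂ ≫ f₂ := by
    rw [Category.assoc, hj₂, ← hγ₂l.w]
  let p₁ : K₁ ⟶ D' := hlim.lift k₁ (l₁ ≫ j₁) hc₁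
  let p₂ : K₂ ⟶ D' := hlim.lift (l₂ ≫ j₂) k₂ hc₂
  have hp₁e₁ : p₁ ≫ e₁ = k₁ := hlim.lift_fst _ _ _
  have hp₁e₂ : p₁ ≫ e₂ = l₁ ≫ j₁ := hlim.lift_snd _ _ _
  have hp₂e₁ : p₂ ≫ e₁ = l₂ ≫ j₂ := hlim.lift_fst _ _ _
  have hp₂e₂ : p₂ ≫ e₂ = k₂ := hlim.lift_snd _ _ _
  -- `d₁ = i₁ ≫ p₁` and `d₂ = i₂ ≫ p₂`
  have hd₁p : d₁ = i₁ ≫ p₁ := by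
    apply hlim.hom_ext
    · rw [hd₁, Category.assoc, hp₁e₁]
    · rw [hd₁', Category.assoc, hp₁e₂]
  have hd₂p : d₂ = i₂ ≫ p₂ := by
    apply hlim.hom_ext
    · rw [hd₂', Category.assoc, hp₂e₁]
    · rw [hd₂, Category.assoc, hp₂e₂]
  -- key step: the square `(l₁, p₁, j₁, e₂)` is a pushout,
  -- by the `M` pushout-pullback decomposition lemma
  have hkey : IsPushout l₁ p₁ j₁ e₂ := by
    have hbig : IsPushout (p₁ ≫ e₁) l₁ f₁ (j₁ ≫ f₂) := by
      rw [hp₁e₁, hj₁]; exact hγ₁l.flip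
    obtain ⟨hsq, -, -, -⟩ :=
      hMdecomp p₁ e₁ l₁ e₂ f₁ j₁ f₂
        hp₁e₂ (hlim.w) hbig hlim hf₂ (Or.inr hl₁)
    exact hsq.flip
  -- left square: pushout of the coproduct rule's left leg
  have hleft : IsPushout (coprod.map l₁ l₂) (coprod.desc p₁ p₂)
      (coprod.desc (j₁ ≫ f₂) m₂) (e₂ ≫ f₂) := by
    refine aux_paste_coprod l₁ p₁ j₁ e₂ l₂ p₂ m₂ f₂ hkey ?_
    rw [hp₂e₂]; exact hγ₂l
  rw [hj₁] at hleft
  -- right square: pasting of `hH'₂` with `hcolim`, then `aux_paste_coprod`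
  have hpaste : IsPushout r₂ (d₂ ≫ g'₁) (n'₂ ≫ h₂) h₁ :=
    (hH'₂.flip.paste_horiz hcolim).flip
  have hright : IsPushout (coprod.map r₁ r₂) (coprod.desc d₁ d₂)
      (coprod.desc (n'₁ ≫ h₁) (n'₂ ≫ h₂)) (g'₁ ≫ h₁) :=
    aux_paste_coprod r₁ d₁ n'₁ g'₁ r₂ d₂ (n'₂ ≫ h₂) h₁ hH'₁ hpaste
  -- assemble the answer
  refine ⟨D', coprod.desc p₁ p₂, e₂ ≫ f₂, g'₁ ≫ h₁,
    coprod.desc (n'₁ ≫ h₁) (n'₂ ≫ h₂), hleft, ?_⟩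
  have hmapk : coprod.map i₁ i₂ ≫ coprod.desc p₁ p₂ = coprod.desc d₁ d₂ := by
    apply coprod.hom_ext
    · simp [hd₁p, coprod.inl_desc, coprod.inr_desc]
    · simp [hd₂p, coprod.inl_desc, coprod.inr_desc]
  rw [hmapk]
  exact hright
end

section
/- If two direct transformations γ₁ ∈ Trans(G, ρ₁) and γ₂ ∈ Trans(G, ρ₂) of an object G by weak spans ρ₁, ρ₂ are parallel independent, then they are parallel coherent. -/
open CategoryTheory

/-- If two direct transformations `γ₁ ∈ Trans(G, ρ₁)` and `γ₂ ∈ Trans(G, ρ₂)` of `G`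
by weak spans `ρ₁, ρ₂` are parallel independent (there exist `j₁ : L₁ ⟶ D₂` and
`j₂ : L₂ ⟶ D₁` with `f₂ ∘ j₁ = m₁` and `f₁ ∘ j₂ = m₂`), then they are parallel
coherent (there exist `j'₁ : I₁ ⟶ D₂` and `j'₂ : I₂ ⟶ D₁` with
`f₂ ∘ j'₁ = f₁ ∘ k₁ ∘ i₁` and `f₁ ∘ j'₂ = f₂ ∘ k₂ ∘ i₂`). -/
theorem parallel_independent_implies_parallel_coherent {C : Type*} [Category C]
    {G : C}
    {L₁ K₁ I₁ R₁ D₁ H₁ : C} {L₂ K₂ I₂ R₂ D₂ H₂ : C}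
    (l₁ : K₁ ⟶ L₁) (i₁ : I₁ ⟶ K₁) (r₁ : I₁ ⟶ R₁)
    (m₁ : L₁ ⟶ G) (k₁ : K₁ ⟶ D₁) (f₁ : D₁ ⟶ G) (g₁ : D₁ ⟶ H₁) (n₁ : R₁ ⟶ H₁)
    (l₂ : K₂ ⟶ L₂) (i₂ : I₂ ⟶ K₂) (r₂ : I₂ ⟶ R₂)
    (m₂ : L₂ ⟶ G) (k₂ : K₂ ⟶ D₂) (f₂ : D₂ ⟶ G) (g₂ : D₂ ⟶ H₂) (n₂ : R₂ ⟶ H₂)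
    (hγ₁left : IsPushout l₁ k₁ m₁ f₁) (hγ₁right : IsPushout r₁ (i₁ ≫ k₁) n₁ g₁)
    (hγ₂left : IsPushout l₂ k₂ m₂ f₂) (hγ₂right : IsPushout r₂ (i₂ ≫ k₂) n₂ g₂)
    (hindep : ∃ (j₁ : L₁ ⟶ D₂) (j₂ : L₂ ⟶ D₁), j₁ ≫ f₂ = m₁ ∧ j₂ ≫ f₁ = m₂) :
    ∃ (j'₁ : I₁ ⟶ D₂) (j'₂ : I₂ ⟶ D₁),
      j'₁ ≫ f₂ = (i₁ ≫ k₁) ≫ f₁ ∧ j'₂ ≫ f₁ = (i₂ ≫ k₂) ≫ f₂ := by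
  obtain ⟨j₁, j₂, h1, h2⟩ := hindep
  refine ⟨i₁ ≫ l₁ ≫ j₁, i₂ ≫ l₂ ≫ j₂, ?_, ?_⟩
  · simp only [Category.assoc, h1]
    rw [← hγ₁left.w]
  · simp only [Category.assoc, h2]
    rw [← hγ₂left.w]
end

section
/- In a weak adhesive HLR category ⟨C,M⟩, given a commutative diagram where the outer rectangle (pasting of a left square and right square) is a pushout, the right square is a pullback, the bottom-right morphism w is in M, and at least one of the two morphisms u (top-left) or v (left vertical) is in M, then both the left and right squares are pushouts and pullbacks. -/
open CategoryTheory

namespace WeakAdhesiveHLR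

variable {C : Type*} [Category C]

/-- The (weak) van Kampen property of a pushout square `(f, g, h, i)` relative to a
class `M` of monomorphisms: for every commutative cube over the square whose back
faces are pullbacks and such that either all four vertical morphisms are in `M`, or
the morphisms `f'`, `h'`, `i'` of the top square are in `M`, the top square is a
pushout iff the two front faces are pullbacks. -/
def WeakVanKampen (M : MorphismProperty C) {W X Y Z : C}
    (f : W ⟶ X) (g : W ⟶ Y) (h : X ⟶ Z) (i : Y ⟶ Z) : Prop :=
  ∀ {W' X' Y' Z' : C} (f' : W' ⟶ X') (g' : W' ⟶ Y') (h' : X' ⟶ Z') (i' : Y' ⟶ Z')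
    (wW : W' ⟶ W) (wX : X' ⟶ X) (wY : Y' ⟶ Y) (wZ : Z' ⟶ Z),
    f' ≫ wX = wW ≫ f → g' ≫ wY = wW ≫ g →
    h' ≫ wZ = wX ≫ h → i' ≫ wZ = wY ≫ i →
    IsPullback f' wW wX f → IsPullback g' wW wY g →
    ((M wW ∧ M wX ∧ M wY ∧ M wZ) ∨ (M f' ∧ M h' ∧ M i')) →
    (IsPushout f' g' h' i' ↔ (IsPullback h' wX wZ h ∧ IsPullback i' wY wZ i))

/-- If `f` is a mono, then the square with `𝟙` on one side and `p`, `f`, `p ≫ f`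
on the others is a pullback. -/
lemma isPullback_id_of_mono {P X Z : C} (p : P ⟶ X) (f : X ⟶ Z) [Mono f] :
    IsPullback p (𝟙 P) f (p ≫ f) :=
  IsPullback.of_isLimit' ⟨by simp⟩ <| Limits.PullbackCone.IsLimit.mk _
    (fun s => s.snd)
    (fun s => by
      have := s.condition
      rw [← cancel_mono f, Category.assoc]
      exact this.symm)
    (fun s => by simp)
    (fun s m hm₁ hm₂ => by simpa using hm₂)

/-- A pushout along a morphism of `M` is a pullback (consequence of the weak van
Kampen property and the closure properties of `M`). -/
lemma isPullback_of_isPushout_of_M (M : MorphismProperty C)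
    (hMmono : ∀ {X Y : C} (f : X ⟶ Y), M f → Mono f)
    (hMpo : ∀ {W X Y Z : C} (f : W ⟶ X) (g : W ⟶ Y) (h : X ⟶ Z) (i : Y ⟶ Z),
      IsPushout f g h i → M f → M i)
    (hMpb : ∀ {P X Y Z : C} (p : P ⟶ X) (q : P ⟶ Y) (f : X ⟶ Z) (g : Y ⟶ Z),
      IsPullback p q f g → M f → M q)
    (hVK : ∀ {W X Y Z : C} (f : W ⟶ X) (g : W ⟶ Y) (h : X ⟶ Z) (i : Y ⟶ Z),
      IsPushout f g h i → M f → WeakVanKampen M f g h i)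
    {W X Y Z : C} (f : W ⟶ X) (g : W ⟶ Y) (h : X ⟶ Z) (i : Y ⟶ Z)
    (hpo : IsPushout f g h i) (hf : M f) : IsPullback f g h i := by
  haveI : Mono f := hMmono f hf
  have hi : M i := hMpo f g h i hpo hf
  haveI : Mono i := hMmono i hi
  have hkf : IsPullback (𝟙 W) (𝟙 W) f f := IsKernelPair.id_of_mono f
  have hki : IsPullback (𝟙 Y) (𝟙 Y) i i := IsKernelPair.id_of_mono i
  have hMW : M (𝟙 W) := hMpb _ _ f f hkf hf
  have hMY : M (𝟙 Y) := hMpb _ _ i i hki hi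
  have := (hVK f g h i hpo hf (𝟙 W) g g (𝟙 Y) (𝟙 W) f (𝟙 Y) i
    (by simp) (by simp) (by simpa using hpo.w.symm) (by simp)
    hkf (IsPullback.id_vert g)
    (Or.inl ⟨hMW, hf, hMY, hi⟩)).mp (IsPushout.of_horiz_isIso ⟨by simp⟩)
  exact this.1.flip

/-- The M pushout-pullback decomposition lemma in a weak adhesive HLR category
`⟨C, M⟩`: if the outer rectangle of two adjacent commutative squares is a pushout,
the right square is a pullback, `w ∈ M` and (`u ∈ M` or `v ∈ M`), then both squares
are pushouts and pullbacks. The weak adhesive HLR structure is given by: `M` is a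
class of monomorphisms closed under composition and under pushouts and pullbacks,
and pushouts along `M`-morphisms are weak van Kampen squares. -/
theorem m_po_pb_decomposition (M : MorphismProperty C)
    (hMmono : ∀ {X Y : C} (f : X ⟶ Y), M f → Mono f)
    (hMcomp : ∀ {X Y Z : C} (f : X ⟶ Y) (g : Y ⟶ Z), M f → M g → M (f ≫ g))
    (hMpo : ∀ {W X Y Z : C} (f : W ⟶ X) (g : W ⟶ Y) (h : X ⟶ Z) (i : Y ⟶ Z),
      IsPushout f g h i → M f → M i)
    (hMpb : ∀ {P X Y Z : C} (p : P ⟶ X) (q : P ⟶ Y) (f : X ⟶ Z) (g : Y ⟶ Z),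
      IsPullback p q f g → M f → M q)
    (hVK : ∀ {W X Y Z : C} (f : W ⟶ X) (g : W ⟶ Y) (h : X ⟶ Z) (i : Y ⟶ Z),
      IsPushout f g h i → M f → WeakVanKampen M f g h i)
    {A B E C' D F : C}
    (u : A ⟶ B) (t : B ⟶ E)
    (v : A ⟶ C') (v₂ : B ⟶ D) (v₃ : E ⟶ F)
    (b : C' ⟶ D) (w : D ⟶ F)
    (hleftcomm : u ≫ v₂ = v ≫ b)
    (houter : IsPushout (u ≫ t) v v₃ (b ≫ w))
    (hrightpb : IsPullback t v₂ v₃ w)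
    (hw : M w) (huv : M u ∨ M v) :
    IsPushout u v v₂ b ∧ IsPullback u v v₂ b ∧
      IsPushout t v₂ v₃ w ∧ IsPullback t v₂ v₃ w := by
  haveI : Mono w := hMmono w hw
  have hMt : M t := hMpb v₂ t w v₃ hrightpb.flip hw
  haveI : Mono t := hMmono t hMt
  -- identities at objects admitting a map into `D` are in `M`
  have hid : ∀ {P : C} (p : P ⟶ D), M (𝟙 P) := fun p =>
    hMpb p (𝟙 _) w (p ≫ w) (isPullback_id_of_mono p w) hw
  have hPBright : IsPullback v₂ t w v₃ := hrightpb.flip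
  have hPBb : IsPullback b (𝟙 C') w (b ≫ w) := isPullback_id_of_mono b w
  have back1 : IsPullback u (𝟙 A) t (u ≫ t) := isPullback_id_of_mono u t
  -- the left square is a pushout, by the weak van Kampen property
  have hleftpo : IsPushout u v v₂ b := by
    rcases huv with hu | hv
    · exact (hVK (u ≫ t) v v₃ (b ≫ w) houter (hMcomp u t hu hMt)
        u v v₂ b (𝟙 A) t (𝟙 C') w
        (by simp) (by simp) hrightpb.w.symm (by simp)
        back1 (IsPullback.id_vert v)
        (Or.inl ⟨hid (u ≫ v₂), hMt, hid b, hw⟩)).mpr ⟨hPBright, hPBb⟩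
    · exact ((hVK v (u ≫ t) (b ≫ w) v₃ houter.flip hv
        v u b v₂ (𝟙 A) (𝟙 C') t w
        (by simp) (by simp) (by simp) hrightpb.w.symm
        (IsPullback.id_vert v) back1
        (Or.inl ⟨hid (u ≫ v₂), hid b, hMt, hw⟩)).mpr ⟨hPBb, hPBright⟩).flip
  -- the right square is a pushout, by pushout cancellation
  have hrightpo : IsPushout t v₂ v₃ w := houter.of_left hrightpb.w hleftpo
  -- the left square is a pullback, being a pushout along `M`
  have hleftpb : IsPullback u v v₂ b := by
    rcases huv with hu | hv
    · exact isPullback_of_isPushout_of_M M hMmono hMpo hMpb hVK u v v₂ b hleftpo hu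
    · exact (isPullback_of_isPushout_of_M M hMmono hMpo hMpb hVK
        v u b v₂ hleftpo.flip hv).flip
  exact ⟨hleftpo, hleftpb, hrightpo, hrightpb⟩

end WeakAdhesiveHLR
end
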